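/- If A is an n×n skew-symmetric matrix, then for every subset S of {1,...,n} of odd cardinality, the cycle-sum C_S(A) equals zero. -/

import Mathlib

open scoped Classical

/-- The cycle-sum `C_S(A)`: sum over all cyclic orderings of `S` of the
corresponding cyclic products of entries of `A`. -/
noncomputable def cycleSum {n : ℕ} (A : Matrix (Fin n) (Fin n) ℂ) (S : Finset (Fin n)) : ℂ :=
  ∑ σ ∈ Finset.univ.filter
      (fun σ : Equiv.Perm (Fin n) =>
        σ.IsCycleOn (S : Set (Fin n)) ∧ ∀ i ∉ S, σ i = i),
    ∏ i ∈ S, A i (σ i)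

/-- The principal minor of `A` with row and column set `S`. -/
noncomputable def pminor {n : ℕ} (A : Matrix (Fin n) (Fin n) ℂ) (S : Finset (Fin n)) : ℂ :=
  (A.submatrix (fun i : S => (i : Fin n)) (fun i : S => (i : Fin n))).det

/-- Odd cycle-sums of a skew-symmetric matrix vanish. -/
theorem stmt1 (n : ℕ) (A : Matrix (Fin n) (Fin n) ℂ) (hA : A.transpose = -A)
    (S : Finset (Fin n)) (hS : Odd S.card) :
    cycleSum A S = 0 := by
  unfold cycleSum
  have hAsymm : ∀ i j, A j i = -A i j := by
    intro i j
    have := congrFun (congrFun hA i) j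
    simpa [Matrix.transpose_apply] using this
  have key : ∀ σ : Equiv.Perm (Fin n), σ.IsCycleOn (S : Set (Fin n)) →
      (∏ i ∈ S, A i (σ⁻¹ i)) = -∏ i ∈ S, A i (σ i) := by
    intro σ hσ
    have hbij : Set.BijOn σ (S : Set (Fin n)) (S : Set (Fin n)) := hσ.1
    have hbij' : Set.BijOn (⇑σ⁻¹) (S : Set (Fin n)) (S : Set (Fin n)) := hσ.inv.1
    have : (∏ i ∈ S, A i (σ⁻¹ i)) = ∏ j ∈ S, A (σ j) j := by
      refine Finset.prod_nbij (fun a => σ⁻¹ a) (fun a ha => ?_) ?_ ?_ ?_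
      · exact hbij'.mapsTo ha
      · intro a _ b _ hab
        exact σ⁻¹.injective hab
      · intro b hb
        obtain ⟨a, ha, rfl⟩ := hbij'.surjOn hb
        exact ⟨a, by simpa using ha, rfl⟩
      · intro a _
        simp
    rw [this]
    have : (∏ j ∈ S, A (σ j) j) = ∏ j ∈ S, (-1 : ℂ) * A j (σ j) :=
      Finset.prod_congr rfl fun j _ => by rw [hAsymm j (σ j)]; ring
    rw [this, Finset.prod_mul_distrib, Finset.prod_const, hS.neg_one_pow, neg_one_mul]
  refine Finset.sum_involution (fun σ _ => σ⁻¹) ?_ ?_ ?_ ?_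
  · intro σ hσ
    simp only [Finset.mem_filter] at hσ
    rw [key σ hσ.2.1]; ring
  · intro σ hσ hne h
    simp only [Finset.mem_filter] at hσ
    apply hne
    have := key σ hσ.2.1
    replace h : σ⁻¹ = σ := h
    rw [h] at this
    exact self_eq_neg.mp this
  · intro σ hσ
    simp only [Finset.mem_filter] at hσ ⊢
    refine ⟨Finset.mem_univ _, hσ.2.1.inv, fun i hi => ?_⟩
    have := hσ.2.2 i hi
    exact (Equiv.Perm.inv_eq_iff_eq).mpr this.symm
  · intro σ _
    simp
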